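/- Let n ≥ 1 and let S_n(Sym_n) be the monoid presented by generators x_1,…,x_n and relations x_{σ(1)}x_{σ(2)}⋯x_{σ(n)} = x_1x_2⋯x_n for all σ ∈ Sym_n. Then two words u, v in the free monoid on x_1,…,x_n, each of which contains a subword of the form x_{σ(1)}x_{σ(2)}⋯x_{σ(n)} for some σ ∈ Sym_n, represent the same element of S_n(Sym_n) if and only if every generator x_i occurs in u and in v the same number of times. -/

import Mathlib

/-- The word `x_{σ(1)} x_{σ(2)} ⋯ x_{σ(n)}` in the free monoid on `n` generators
(generator `x_j` is indexed by `j-1 : Fin n`). -/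
def permWord {n : ℕ} (σ : Equiv.Perm (Fin n)) : FreeMonoid (Fin n) :=
  FreeMonoid.ofList (List.ofFn fun i => σ i)

/-- The word `x_ε = x_1 x_2 ⋯ x_n`. -/
def epsWord (n : ℕ) : FreeMonoid (Fin n) :=
  FreeMonoid.ofList (List.ofFn fun i : Fin n => i)

/-- The defining relations `x_{σ(1)} ⋯ x_{σ(n)} = x_1 ⋯ x_n`, `σ ∈ Sym_n`. -/
def symRel (n : ℕ) : FreeMonoid (Fin n) → FreeMonoid (Fin n) → Prop :=
  fun a b => ∃ σ : Equiv.Perm (Fin n), a = permWord σ ∧ b = epsWord n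

/-- The canonical projection from the free monoid onto `S_n(Sym_n)`. -/
def proj (n : ℕ) : FreeMonoid (Fin n) →* PresentedMonoid (symRel n) :=
  PresentedMonoid.mk (symRel n)

/-- `u` contains a subword of the form `x_{σ(1)} ⋯ x_{σ(n)}` for some `σ ∈ Sym_n`. -/
def HasPermSubword {n : ℕ} (u : FreeMonoid (Fin n)) : Prop :=
  ∃ (σ : Equiv.Perm (Fin n)) (a b : FreeMonoid (Fin n)), u = a * permWord σ * b

/-- The word `x_1^{m_1} · x_ε · x_2^{m_2} ⋯ x_n^{m_n}` (0-indexed: `m i` is the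
exponent of generator `i`). -/
def normalWord (n : ℕ) (h : 0 < n) (m : Fin n → ℕ) : FreeMonoid (Fin n) :=
  FreeMonoid.ofList (List.replicate (m ⟨0, h⟩) ⟨0, h⟩) * epsWord n *
    FreeMonoid.ofList (((List.finRange n).drop 1).flatMap fun i => List.replicate (m i) i)
/- ### Auxiliary lemmas -/

lemma perm_finRange_of_nodup {n : ℕ} {l : List (Fin n)} (hd : l.Nodup) (hl : l.length = n) :
    l.Perm (List.finRange n) :=
  (hd.subperm (fun x _ => List.mem_finRange x)).perm_of_length_le (by simp [hl])

lemma exists_perm_eq {n : ℕ} {l : List (Fin n)} (h : l.Perm (List.finRange n)) :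
    ∃ σ : Equiv.Perm (Fin n), List.ofFn (fun i => σ i) = l := by
  have hl : l.length = n := by simpa using h.length_eq
  have hd : l.Nodup := h.nodup_iff.mpr (List.nodup_finRange n)
  have hinj : Function.Injective (fun i : Fin n => l.get (Fin.cast hl.symm i)) := by
    intro a b hab
    have := List.nodup_iff_injective_get.mp hd hab
    simpa [Fin.ext_iff] using this
  refine ⟨Equiv.ofBijective _ ((Finite.injective_iff_bijective).mp hinj), ?_⟩
  apply List.ext_get (by simp [hl])
  intro i h1 h2
  simp [Equiv.ofBijective]

lemma proj_rel {n : ℕ} (σ : Equiv.Perm (Fin n)) : proj n (permWord σ) = proj n (epsWord n) :=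
  Quotient.sound (ConGen.Rel.of _ _ ⟨σ, rfl, rfl⟩)

lemma proj_ofList_perm {n : ℕ} {l : List (Fin n)} (h : l.Perm (List.finRange n)) :
    proj n (FreeMonoid.ofList l) = proj n (epsWord n) := by
  obtain ⟨σ, hσ⟩ := exists_perm_eq h
  rw [← hσ]
  exact proj_rel σ

lemma eps_comm {n : ℕ} (i : Fin n) :
    proj n (epsWord n) * proj n (FreeMonoid.of i)
      = proj n (FreeMonoid.of i) * proj n (epsWord n) := by
  set s := (List.finRange n).erase i with hs
  have hi : i ∈ List.finRange n := List.mem_finRange i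
  have h1 : (i :: s).Perm (List.finRange n) := (List.perm_cons_erase hi).symm
  have h2 : (s ++ [i]).Perm (List.finRange n) :=
    (List.perm_append_singleton i s).trans h1
  have e1 : proj n (FreeMonoid.of i) * proj n (FreeMonoid.ofList s) = proj n (epsWord n) := by
    rw [← map_mul, ← FreeMonoid.ofList_cons]
    exact proj_ofList_perm h1
  have e2 : proj n (FreeMonoid.ofList s) * proj n (FreeMonoid.of i) = proj n (epsWord n) := by
    rw [← map_mul, ← FreeMonoid.ofList_singleton, ← FreeMonoid.ofList_append]
    exact proj_ofList_perm h2
  calc proj n (epsWord n) * proj n (FreeMonoid.of i)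
      = proj n (FreeMonoid.of i) * proj n (FreeMonoid.ofList s) * proj n (FreeMonoid.of i) := by
        rw [e1]
    _ = proj n (FreeMonoid.of i) * (proj n (FreeMonoid.ofList s) * proj n (FreeMonoid.of i)) := by
        rw [mul_assoc]
    _ = proj n (FreeMonoid.of i) * proj n (epsWord n) := by rw [e2]

lemma eps_comm_word {n : ℕ} (w : FreeMonoid (Fin n)) :
    proj n (epsWord n) * proj n w = proj n w * proj n (epsWord n) := by
  induction w using FreeMonoid.inductionOn' with
  | one => simp
  | of_mul x w ih =>
      rw [map_mul, ← mul_assoc, eps_comm x, mul_assoc, ih, ← mul_assoc]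

lemma eps_swap {n : ℕ} (i j : Fin n) :
    proj n (epsWord n) * proj n (FreeMonoid.of i) * proj n (FreeMonoid.of j)
      = proj n (epsWord n) * proj n (FreeMonoid.of j) * proj n (FreeMonoid.of i) := by
  rcases eq_or_ne i j with rfl | hij
  · rfl
  · set t := (((List.finRange n).erase i).erase j) with ht
    have hi : i ∈ List.finRange n := List.mem_finRange i
    have hj : j ∈ (List.finRange n).erase i :=
      (List.mem_erase_of_ne hij.symm).mpr (List.mem_finRange j)
    have hperm1 : (i :: j :: t).Perm (List.finRange n) :=
      (((List.perm_cons_erase hj).symm).cons i).trans (List.perm_cons_erase hi).symm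
    have hperm2 : (j :: i :: t).Perm (List.finRange n) :=
      (List.Perm.swap i j t).trans hperm1
    have hperm3 : (t ++ [i, j]).Perm (List.finRange n) :=
      List.perm_append_comm.trans hperm1
    have key : ∀ a b : Fin n, (a :: b :: t).Perm (List.finRange n) →
        proj n (FreeMonoid.of a) * proj n (FreeMonoid.of b) * proj n (epsWord n)
          = proj n (epsWord n) * proj n (FreeMonoid.ofList [i, j]) := by
      intro a b hab
      calc proj n (FreeMonoid.of a) * proj n (FreeMonoid.of b) * proj n (epsWord n)
          = proj n (FreeMonoid.of a) * proj n (FreeMonoid.of b)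
              * proj n (FreeMonoid.ofList (t ++ [i, j])) := by rw [proj_ofList_perm hperm3]
        _ = proj n (FreeMonoid.ofList (a :: b :: t)) * proj n (FreeMonoid.ofList [i, j]) := by
              rw [← map_mul, ← map_mul, ← map_mul]; rfl
        _ = proj n (epsWord n) * proj n (FreeMonoid.ofList [i, j]) := by
              rw [proj_ofList_perm hab]
    have c1 : proj n (FreeMonoid.of i) * proj n (FreeMonoid.of j) * proj n (epsWord n)
        = proj n (FreeMonoid.of j) * proj n (FreeMonoid.of i) * proj n (epsWord n) :=
      (key i j hperm1).trans (key j i hperm2).symm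
    calc proj n (epsWord n) * proj n (FreeMonoid.of i) * proj n (FreeMonoid.of j)
        = proj n (FreeMonoid.of i) * proj n (epsWord n) * proj n (FreeMonoid.of j) := by
          rw [eps_comm]
      _ = proj n (FreeMonoid.of i) * (proj n (epsWord n) * proj n (FreeMonoid.of j)) := by
          rw [mul_assoc]
      _ = proj n (FreeMonoid.of i) * (proj n (FreeMonoid.of j) * proj n (epsWord n)) := by
          rw [eps_comm]
      _ = proj n (FreeMonoid.of i) * proj n (FreeMonoid.of j) * proj n (epsWord n) := by
          rw [mul_assoc]
      _ = proj n (FreeMonoid.of j) * proj n (FreeMonoid.of i) * proj n (epsWord n) := c1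
      _ = proj n (FreeMonoid.of j) * (proj n (FreeMonoid.of i) * proj n (epsWord n)) := by
          rw [mul_assoc]
      _ = proj n (FreeMonoid.of j) * (proj n (epsWord n) * proj n (FreeMonoid.of i)) := by
          rw [eps_comm]
      _ = proj n (FreeMonoid.of j) * proj n (epsWord n) * proj n (FreeMonoid.of i) := by
          rw [mul_assoc]
      _ = proj n (epsWord n) * proj n (FreeMonoid.of j) * proj n (FreeMonoid.of i) := by
          rw [eps_comm]

lemma eps_mul_perm {n : ℕ} {l₁ l₂ : List (Fin n)} (h : l₁.Perm l₂) :
    proj n (epsWord n) * proj n (FreeMonoid.ofList l₁)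
      = proj n (epsWord n) * proj n (FreeMonoid.ofList l₂) := by
  induction h with
  | nil => rfl
  | cons x _ ih =>
      rw [FreeMonoid.ofList_cons, FreeMonoid.ofList_cons, map_mul, map_mul,
        ← mul_assoc, ← mul_assoc, eps_comm x, mul_assoc, mul_assoc, ih]
  | swap x y l =>
      simp only [FreeMonoid.ofList_cons, map_mul, ← mul_assoc]
      rw [eps_swap y x]
  | trans _ _ ih1 ih2 => rw [ih1, ih2]

lemma count_permWord {n : ℕ} (i : Fin n) (σ : Equiv.Perm (Fin n)) :
    (FreeMonoid.toList (permWord σ)).count i = 1 := by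
  apply List.count_eq_one_of_mem (List.nodup_ofFn_ofInjective σ.injective)
  simp only [permWord, FreeMonoid.toList_ofList, List.mem_ofFn]
  exact ⟨σ.symm i, by simp⟩

lemma decomp {n : ℕ} {u : FreeMonoid (Fin n)} (hu : HasPermSubword u) :
    ∃ w : FreeMonoid (Fin n), proj n u = proj n (epsWord n) * proj n w ∧
      ∀ i : Fin n, (FreeMonoid.toList u).count i = (FreeMonoid.toList w).count i + 1 := by
  obtain ⟨σ, a, b, rfl⟩ := hu
  refine ⟨a * b, ?_, ?_⟩
  · rw [map_mul, map_mul, proj_rel, map_mul, ← eps_comm_word, mul_assoc]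
  · intro i
    simp only [FreeMonoid.toList_mul, List.count_append, count_permWord i σ]
    omega

/-- Two words, each containing a subword of the form `x_{σ(1)}⋯x_{σ(n)}`, represent the same
element of `S_n(Sym_n)` if and only if every generator occurs in both the same
number of times. -/
theorem proj_eq_iff_count_eq (n : ℕ) (hn : 1 ≤ n) (u v : FreeMonoid (Fin n))
    (hu : HasPermSubword u) (hv : HasPermSubword v) :
    proj n u = proj n v ↔
      ∀ i : Fin n, (FreeMonoid.toList u).count i = (FreeMonoid.toList v).count i := by
  constructor
  · intro h i
    set f : Fin n → Multiplicative (Multiset (Fin n)) :=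
      fun i => Multiplicative.ofAdd {i} with hf
    have hlift : ∀ w : FreeMonoid (Fin n),
        FreeMonoid.lift f w = Multiplicative.ofAdd (↑(FreeMonoid.toList w) : Multiset (Fin n)) := by
      intro w
      induction w using FreeMonoid.inductionOn' with
      | one => rfl
      | of_mul x w ih =>
          rw [map_mul, FreeMonoid.lift_eval_of, ih]
          rfl
    have hrel : ∀ a b, symRel n a b → FreeMonoid.lift f a = FreeMonoid.lift f b := by
      rintro a b ⟨σ, rfl, rfl⟩
      rw [hlift, hlift]
      congr 1
      apply Multiset.coe_eq_coe.mpr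
      have h1 : (List.ofFn fun i => σ i).Perm (List.finRange n) :=
        perm_finRange_of_nodup (List.nodup_ofFn_ofInjective σ.injective) (by simp)
      have h2 : (List.ofFn fun i : Fin n => i).Perm (List.finRange n) := by
        rw [show (fun i : Fin n => i) = id from rfl, List.ofFn_id]
      exact h1.trans h2.symm
    have h2 : FreeMonoid.lift f u = FreeMonoid.lift f v :=
      congrArg (PresentedMonoid.lift f hrel) h
    rw [hlift, hlift] at h2
    have h3 : (↑(FreeMonoid.toList u) : Multiset (Fin n)) = ↑(FreeMonoid.toList v) :=
      Multiplicative.ofAdd.injective h2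
    exact (Multiset.coe_eq_coe.mp h3).count_eq i
  · intro h
    obtain ⟨w₁, he₁, hc₁⟩ := decomp hu
    obtain ⟨w₂, he₂, hc₂⟩ := decomp hv
    rw [he₁, he₂]
    have hperm : (FreeMonoid.toList w₁).Perm (FreeMonoid.toList w₂) :=
      List.perm_iff_count.mpr fun i => by have := h i; have := hc₁ i; have := hc₂ i; omega
    have := eps_mul_perm hperm
    rwa [FreeMonoid.ofList_toList, FreeMonoid.ofList_toList] at this
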